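/- Every 101-avoiding ascent sequence of length n, when written in the canonical form determined by its Fishburn matrix, corresponds to an SE-free matrix, and conversely: f_AM restricts to a bijection between 101-avoiding ascent sequences of length n and SE-free Fishburn matrices of size n. -/

import Mathlib

def ascents (l : List ℕ) : ℕ :=
  ((l.zip l.tail).filter (fun p => p.1 < p.2)).length

def IsAscSeq (l : List ℕ) : Prop :=
  l.getD 0 0 = 0 ∧
  ∀ k, k < l.length → 0 < k → l.getD k 0 ≤ ascents (l.take k) + 1

def IsRGF (l : List ℕ) : Prop :=
  l.getD 0 0 = 0 ∧
  ∀ k, k < l.length → ∀ j, l.getD k 0 = j + 1 → ∃ i, i < k ∧ l.getD i 0 = j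

def SelfModified (l : List ℕ) : Prop :=
  IsAscSeq l ∧
  ∀ k, k < l.length → 0 < k →
    l.getD k 0 ≤ l.getD (k - 1) 0 ∨ l.getD k 0 = ascents (l.take k) + 1

def Contains101 (l : List ℕ) : Prop :=
  ∃ i j k, i < j ∧ j < k ∧ k < l.length ∧
    l.getD i 0 = l.getD k 0 ∧ l.getD j 0 < l.getD k 0

def Contains0101 (l : List ℕ) : Prop :=
  ∃ i j k m, i < j ∧ j < k ∧ k < m ∧ m < l.length ∧
    l.getD i 0 = l.getD k 0 ∧ l.getD j 0 = l.getD m 0 ∧ l.getD i 0 < l.getD j 0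

def Contains1010 (l : List ℕ) : Prop :=
  ∃ i j k m, i < j ∧ j < k ∧ k < m ∧ m < l.length ∧
    l.getD i 0 = l.getD k 0 ∧ l.getD j 0 = l.getD m 0 ∧ l.getD j 0 < l.getD i 0

/-- The view of position `i` in the sequence `a`: the number of indices `j > i` such
that `a j` strictly exceeds all entries `a k` for `i ≤ k < j`.  This agrees with the
recursive definition `v i = v j + 1` for `j` the least index `> i` with `a j > a i`. -/
def view {α : Type*} [LinearOrder α] [Inhabited α] (a : List α) (i : ℕ) : ℕ :=
  ((List.range a.length).filter (fun j =>
    decide (i < j ∧ ∀ k, k < j → i ≤ k → a.getD k default < a.getD j default))).length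

/-- The panorama of `a`: the views of the positions of `a`, listed grouped by entry
value from largest value to smallest, positions within a group in increasing order. -/
def pan {α : Type*} [LinearOrder α] [Inhabited α] (a : List α) : List ℕ :=
  ((List.range a.length).mergeSort (fun i j =>
    decide (a.getD j default < a.getD i default ∨
      (a.getD i default = a.getD j default ∧ i ≤ j)))).map (view a)

/-- A square matrix of natural numbers, given by a dimension and an entry function
(indices are 0-based; entries with an index `≥ d` are irrelevant/zero). -/
structure FMat where
  d : ℕ
  entry : ℕ → ℕ → ℕ

/-- 0-based index of the first row whose rightmost entry is nonzero. -/
noncomputable def mindex (M : FMat) : ℕ :=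
  sInf {i | M.entry i (M.d - 1) ≠ 0}

/-- One step of the recursive bijection from ascent sequences to Fishburn matrices,
with cases AM1, AM2, AM3 (0-based indices). -/
noncomputable def fStep (M : FMat) (a : ℕ) : FMat :=
  if a ≤ mindex M then
    -- AM1: increase entry (a, d-1)
    ⟨M.d, fun i j => M.entry i j + if i = a ∧ j = M.d - 1 then 1 else 0⟩
  else if a = M.d then
    -- AM2: append a new row and column, with 1 in the new diagonal entry
    ⟨M.d + 1, fun i j =>
      if i = M.d ∨ j = M.d then (if i = M.d ∧ j = M.d then 1 else 0)
      else M.entry i j⟩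
  else
    -- AM3: insert a new row and column at index a
    ⟨M.d + 1, fun i j =>
      if i = a then (if j = M.d then 1 else 0)
      else if j = a then (if i < a then M.entry i (M.d - 1) else 0)
      else if j = M.d ∧ i < a then 0
      else M.entry (if i < a then i else i - 1) (if j < a then j else j - 1)⟩

/-- The map from ascent sequences to Fishburn matrices. -/
noncomputable def fAM (l : List ℕ) : FMat :=
  l.tail.foldl fStep ⟨1, fun i j => if i = 0 ∧ j = 0 then 1 else 0⟩

/-- Fishburn matrix: upper triangular (and supported on `[0,d) × [0,d)`),
with no zero row and no zero column. -/
def IsFishburn (M : FMat) : Prop :=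
  (∀ i j, (M.d ≤ i ∨ M.d ≤ j ∨ j < i) → M.entry i j = 0) ∧
  (∀ i, i < M.d → ∃ j, j < M.d ∧ M.entry i j ≠ 0) ∧
  (∀ j, j < M.d → ∃ i, i < M.d ∧ M.entry i j ≠ 0)

def entrySum (M : FMat) : ℕ :=
  ∑ i ∈ Finset.range M.d, ∑ j ∈ Finset.range M.d, M.entry i j

/-- Reflection of a matrix through its antidiagonal. -/
def reflect (M : FMat) : FMat :=
  ⟨M.d, fun i j => if i < M.d ∧ j < M.d then M.entry (M.d - 1 - j) (M.d - 1 - i) else 0⟩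

/-- The canonical sequence `(0^{m₀₀}, 1^{m₁₁}, 0^{m₀₁}, 2^{m₂₂}, 1^{m₁₂}, 0^{m₀₂}, …)`
(0-based indices) associated to a matrix; this is `f_MA(M)` for `M ∈ RMatrices`. -/
def canonSeq (M : FMat) : List ℕ :=
  (List.range M.d).flatMap (fun j =>
    (List.range (j + 1)).reverse.flatMap (fun i => List.replicate (M.entry i j) i))

/-- The dual canonical sequence
`(0^{m_{d-1,d-1}}, 1^{m_{d-2,d-2}}, 0^{m_{d-2,d-1}}, …, (d-1)^{m_{0,0}}, …, 0^{m_{0,d-1}})`,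
i.e. `f_MA` applied to the antidiagonal reflection of `M`. -/
def dualCanonSeq (M : FMat) : List ℕ :=
  (List.range M.d).flatMap (fun j =>
    (List.range (j + 1)).reverse.flatMap (fun i =>
      List.replicate (M.entry (M.d - 1 - j) (M.d - 1 - i)) i))

/-- A matrix is SE-free if it has no pair of nonzero entries `m i j`, `m i' j'`
with `i < i'`, `j < j'` and `i' ≤ j`. -/
def SEFree (M : FMat) : Prop :=
  ¬ ∃ i j i' j', i < i' ∧ j < j' ∧ i' ≤ j ∧ j' < M.d ∧
    M.entry i j ≠ 0 ∧ M.entry i' j' ≠ 0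

/-- Generalized ballot sequence (Yamanouchi word): in every prefix, each value `j+1`
occurs at most as often as `j`. -/
def IsBallot (l : List ℕ) : Prop :=
  ∀ k j, (l.take k).count (j + 1) ≤ (l.take k).count j

namespace Avoid101

open List

/-! ### Block structure of canonSeq -/

def blockOf (e : ℕ → ℕ → ℕ) (j : ℕ) : List ℕ :=
  (List.range (j + 1)).reverse.flatMap (fun i => List.replicate (e i j) i)

def cs (e : ℕ → ℕ → ℕ) (d : ℕ) : List ℕ :=
  (List.range d).flatMap (blockOf e)

lemma canonSeq_eq (M : FMat) : canonSeq M = cs M.entry M.d := rfl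

lemma cs_succ (e : ℕ → ℕ → ℕ) (d : ℕ) :
    cs e (d + 1) = cs e d ++ blockOf e d := by
  simp [cs, List.range_succ]

lemma mem_blockOf {e : ℕ → ℕ → ℕ} {j w : ℕ} :
    w ∈ blockOf e j ↔ w ≤ j ∧ e w j ≠ 0 := by
  simp only [blockOf, List.mem_flatMap, List.mem_reverse, List.mem_range,
    List.mem_replicate]
  constructor
  · rintro ⟨i, hi, hne, rfl⟩; exact ⟨Nat.lt_succ_iff.mp hi, hne⟩
  · rintro ⟨hw, hne⟩; exact ⟨w, Nat.lt_succ_iff.mpr hw, hne, rfl⟩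

lemma mem_cs {e : ℕ → ℕ → ℕ} {d w : ℕ} :
    w ∈ cs e d ↔ ∃ c, w ≤ c ∧ c < d ∧ e w c ≠ 0 := by
  simp only [cs, List.mem_flatMap, List.mem_range, mem_blockOf]
  constructor
  · rintro ⟨c, hc, hw, hne⟩; exact ⟨c, hw, hc, hne⟩
  · rintro ⟨c, hw, hc, hne⟩; exact ⟨c, hc, hw, hne⟩

lemma flatMap_congr {α β : Type*} {l : List α} {f g : α → List β}
    (h : ∀ x ∈ l, f x = g x) : l.flatMap f = l.flatMap g := by
  induction l with
  | nil => rfl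
  | cons x l ih =>
    simp only [List.flatMap_cons]
    rw [h x List.mem_cons_self, ih fun y hy => h y (List.mem_cons_of_mem _ hy)]

lemma blockOf_congr {e e' : ℕ → ℕ → ℕ} {j : ℕ}
    (h : ∀ i ≤ j, e i j = e' i j) : blockOf e j = blockOf e' j := by
  apply flatMap_congr
  intro x hx
  rw [List.mem_reverse, List.mem_range, Nat.lt_succ_iff] at hx
  rw [h x hx]

lemma flatMap_eq_nil {α β : Type*} {l : List α} {f : α → List β}
    (h : ∀ x ∈ l, f x = []) : l.flatMap f = [] := by
  rw [flatMap_congr h]; simp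

/-- Splitting the reversed range at `a`. -/
lemma range_succ_reverse_split {a j : ℕ} (ha : a ≤ j) :
    (List.range (j + 1)).reverse =
      (List.map (fun t => a + 1 + t) (List.range (j - a))).reverse ++ [a] ++
        (List.range a).reverse := by
  have h1 : List.range (j + 1) = List.range (a + 1) ++
      List.map (fun t => a + 1 + t) (List.range (j - a)) := by
    have : j + 1 = (a + 1) + (j - a) := by omega
    rw [this, List.range_add]
  rw [h1, List.range_succ]
  simp [List.reverse_append]

/-- Decompose a block at row `a`. -/
lemma blockOf_split {e : ℕ → ℕ → ℕ} {j a : ℕ} (ha : a ≤ j) :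
    blockOf e j =
      ((List.map (fun t => a + 1 + t) (List.range (j - a))).reverse.flatMap
        (fun i => List.replicate (e i j) i)) ++ List.replicate (e a j) a ++
      ((List.range a).reverse.flatMap (fun i => List.replicate (e i j) i)) := by
  rw [blockOf, range_succ_reverse_split ha]
  simp [List.flatMap_append]

/-- If all rows below `a` vanish in column `j`, the block ends with `a`'s. -/
lemma blockOf_split_low {e : ℕ → ℕ → ℕ} {j a : ℕ} (ha : a ≤ j)
    (h0 : ∀ i, i < a → e i j = 0) :
    blockOf e j =
      ((List.map (fun t => a + 1 + t) (List.range (j - a))).reverse.flatMap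
        (fun i => List.replicate (e i j) i)) ++ List.replicate (e a j) a := by
  have hnil : ((List.range a).reverse.flatMap fun i => List.replicate (e i j) i) = [] := by
    apply flatMap_eq_nil
    intro x hx
    rw [List.mem_reverse, List.mem_range] at hx
    rw [h0 x hx, List.replicate_zero]
  rw [blockOf_split ha, List.append_assoc, hnil, List.append_nil]

/-! ### Positions -/

lemma pos_of_mem_append {s t : List ℕ} {v w : ℕ} (hv : v ∈ s) (hw : w ∈ t) :
    ∃ p q, p < q ∧ q < (s ++ t).length ∧ (s ++ t).getD p 0 = v ∧
      (s ++ t).getD q 0 = w := by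
  obtain ⟨p, hp, hpv⟩ := List.mem_iff_getElem.mp hv
  obtain ⟨q0, hq0, hq0w⟩ := List.mem_iff_getElem.mp hw
  refine ⟨p, s.length + q0, by omega, by simp; omega, ?_, ?_⟩
  · rw [List.getD_append _ _ _ _ hp, List.getD_eq_getElem _ _ hp, hpv]
  · rw [List.getD_append_right _ _ _ _ (by omega), Nat.add_sub_cancel_left,
      List.getD_eq_getElem _ _ hq0, hq0w]

lemma pairwise_ge_blockOf (e : ℕ → ℕ → ℕ) (j : ℕ) :
    List.Pairwise (fun x y => y ≤ x) (blockOf e j) := by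
  have hp : List.Pairwise (fun x y => y < x) (List.range (j + 1)).reverse := by
    rw [List.pairwise_reverse]; exact List.pairwise_lt_range
  rw [blockOf]
  generalize (List.range (j + 1)).reverse = L at hp ⊢
  induction L with
  | nil => simp
  | cons x L ih =>
    simp only [List.flatMap_cons]
    rw [List.pairwise_append]
    refine ⟨?_, ih hp.of_cons, ?_⟩
    · exact List.pairwise_replicate.mpr (Or.inr le_rfl)
    · intro u hu v hv
      rw [List.mem_replicate] at hu
      obtain ⟨y, hy, hvy⟩ := List.mem_flatMap.mp hv
      rw [List.mem_replicate] at hvy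
      have := (List.pairwise_cons.mp hp).1 y hy
      omega

/-- Converse positional lemma: entries at two positions of `cs e d`. -/
lemma cs_pos_spec {e : ℕ → ℕ → ℕ} {d p q : ℕ} (hpq : p < q)
    (hq : q < (cs e d).length) :
    ∃ v w c c', (cs e d).getD p 0 = v ∧ (cs e d).getD q 0 = w ∧
      v ≤ c ∧ w ≤ c' ∧ c < d ∧ c' < d ∧ e v c ≠ 0 ∧ e w c' ≠ 0 ∧
      (c < c' ∨ (c = c' ∧ w ≤ v)) := by
  induction d with
  | zero => simp [cs] at hq
  | succ d ih =>
    rw [cs_succ] at hq ⊢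
    set s := cs e d with hs
    set b := blockOf e d with hb
    rw [List.length_append] at hq
    by_cases hqs : q < s.length
    · have hps : p < s.length := lt_trans hpq hqs
      rw [List.getD_append _ _ _ _ hps, List.getD_append _ _ _ _ hqs]
      obtain ⟨v, w, c, c', h1, h2, h3, h4, h5, h6, h7, h8, h9⟩ := ih hqs
      exact ⟨v, w, c, c', h1, h2, h3, h4, Nat.lt_succ_of_lt h5,
        Nat.lt_succ_of_lt h6, h7, h8, h9⟩
    · push_neg at hqs
      have hqb : q - s.length < b.length := by omega
      have hw : (s ++ b).getD q 0 = b[q - s.length] := by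
        rw [List.getD_append_right _ _ _ _ hqs, List.getD_eq_getElem _ _ hqb]
      have hwb : b[q - s.length] ∈ b := List.getElem_mem _
      obtain ⟨hwle, hwne⟩ := mem_blockOf.mp hwb
      by_cases hps : p < s.length
      · have hv : (s ++ b).getD p 0 = s[p] := by
          rw [List.getD_append _ _ _ _ hps, List.getD_eq_getElem _ _ hps]
        have hvs : s[p] ∈ s := List.getElem_mem _
        obtain ⟨c, hvle, hcd, hvne⟩ := mem_cs.mp hvs
        exact ⟨s[p], b[q - s.length], c, d, hv, hw, hvle, hwle, Nat.lt_succ_of_lt hcd,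
          Nat.lt_succ_self d, hvne, hwne, Or.inl hcd⟩
      · push_neg at hps
        have hpb : p - s.length < b.length := by omega
        have hv : (s ++ b).getD p 0 = b[p - s.length] := by
          rw [List.getD_append_right _ _ _ _ hps, List.getD_eq_getElem _ _ hpb]
        have hvb : b[p - s.length] ∈ b := List.getElem_mem _
        obtain ⟨hvle, hvne⟩ := mem_blockOf.mp hvb
        have hord : b[q - s.length] ≤ b[p - s.length] := by
          have := List.pairwise_iff_getElem.mp (pairwise_ge_blockOf e d)
            (p - s.length) (q - s.length) hpb hqb (by omega)
          exact this
        exact ⟨b[p - s.length], b[q - s.length], d, d, hv, hw, hvle, hwle,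
          Nat.lt_succ_self d, Nat.lt_succ_self d, hvne, hwne, Or.inr ⟨rfl, hord⟩⟩

/-- Forward positional lemma: canonically earlier nonzero entries give ordered
positions. -/
lemma cs_pos_exists {e : ℕ → ℕ → ℕ} {d v c w c' : ℕ}
    (hvc : v ≤ c) (hwc : w ≤ c') (hcd : c < d) (hcd' : c' < d)
    (hv : e v c ≠ 0) (hw : e w c' ≠ 0)
    (hord : c < c' ∨ (c = c' ∧ w < v)) :
    ∃ p q, p < q ∧ q < (cs e d).length ∧ (cs e d).getD p 0 = v ∧
      (cs e d).getD q 0 = w := by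
  rcases hord with hlt | ⟨rfl, hwv⟩
  · -- different columns
    have hsplit : List.range d = List.range (c + 1) ++
        List.map (fun t => c + 1 + t) (List.range (d - c - 1)) := by
      have : d = (c + 1) + (d - c - 1) := by omega
      rw [← List.range_add, ← this]
    have : cs e d = ((List.range (c + 1)).flatMap (blockOf e)) ++
        ((List.map (fun t => c + 1 + t) (List.range (d - c - 1))).flatMap (blockOf e)) := by
      rw [cs, hsplit, List.flatMap_append]
    rw [this]
    apply pos_of_mem_append
    · exact List.mem_flatMap.mpr ⟨c, List.mem_range.mpr (Nat.lt_succ_self c),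
        mem_blockOf.mpr ⟨hvc, hv⟩⟩
    · refine List.mem_flatMap.mpr ⟨c', ?_, mem_blockOf.mpr ⟨hwc, hw⟩⟩
      rw [List.mem_map]
      exact ⟨c' - c - 1, List.mem_range.mpr (by omega), by omega⟩
  · -- same column, w < v
    have hsplit : List.range d = (List.range c ++ [c]) ++
        List.map (fun t => c + 1 + t) (List.range (d - c - 1)) := by
      rw [← List.range_succ]
      have : d = (c + 1) + (d - c - 1) := by omega
      rw [← List.range_add, ← this]
    have hcs : cs e d = (List.range c).flatMap (blockOf e) ++ blockOf e c ++
        (List.map (fun t => c + 1 + t) (List.range (d - c - 1))).flatMap (blockOf e) := by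
      rw [cs, hsplit]
      simp [List.flatMap_append]
    rw [hcs, blockOf_split (a := v) hvc]
    set A := (List.map (fun t => v + 1 + t) (List.range (c - v))).reverse.flatMap
      (fun i => List.replicate (e i c) i)
    set B := (List.range v).reverse.flatMap (fun i => List.replicate (e i c) i)
    set P := (List.range c).flatMap (blockOf e)
    set S := (List.map (fun t => c + 1 + t) (List.range (d - c - 1))).flatMap (blockOf e)
    have hre : P ++ (A ++ List.replicate (e v c) v ++ B) ++ S =
        (P ++ A ++ List.replicate (e v c) v) ++ (B ++ S) := by
      simp [List.append_assoc]
    rw [hre]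
    apply pos_of_mem_append
    · refine List.mem_append.mpr (Or.inr ?_)
      rw [List.mem_replicate]
      exact ⟨hv, rfl⟩
    · refine List.mem_append.mpr (Or.inl ?_)
      refine List.mem_flatMap.mpr ⟨w, ?_, ?_⟩
      · rw [List.mem_reverse, List.mem_range]; exact hwv
      · rw [List.mem_replicate]; exact ⟨hw, rfl⟩

/-! ### Lengths and sums -/

lemma sum_map_range {g : ℕ → ℕ} {n : ℕ} :
    ((List.range n).map g).sum = ∑ i ∈ Finset.range n, g i := by
  induction n with
  | zero => simp
  | succ n ih => rw [List.range_succ, Finset.sum_range_succ]; simp [ih]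

lemma length_flatMap_range {f : ℕ → List ℕ} {n : ℕ} :
    ((List.range n).flatMap f).length = ∑ i ∈ Finset.range n, (f i).length := by
  rw [List.length_flatMap]
  have h : ((List.range n).map (fun i => (f i).length)).sum = ∑ i ∈ Finset.range n, (f i).length := sum_map_range
  convert h using 2

lemma length_blockOf {e : ℕ → ℕ → ℕ} {j : ℕ} :
    (blockOf e j).length = ∑ i ∈ Finset.range (j + 1), e i j := by
  rw [blockOf, List.length_flatMap]
  rw [List.map_reverse, List.sum_reverse, ← sum_map_range]
  congr 1
  simp

lemma length_cs {e : ℕ → ℕ → ℕ} {d : ℕ} :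
    (cs e d).length = ∑ j ∈ Finset.range d, ∑ i ∈ Finset.range (j + 1), e i j := by
  rw [cs, length_flatMap_range]
  exact Finset.sum_congr rfl fun j _ => length_blockOf

lemma entrySum_eq {M : FMat} (hF : IsFishburn M) :
    entrySum M = ∑ j ∈ Finset.range M.d, ∑ i ∈ Finset.range (j + 1), M.entry i j := by
  rw [entrySum, Finset.sum_comm]
  apply Finset.sum_congr rfl
  intro j hj
  rw [Finset.mem_range] at hj
  symm
  apply Finset.sum_subset
  · intro i hi
    rw [Finset.mem_range] at hi ⊢; omega
  · intro i _ hi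
    rw [Finset.mem_range, Nat.lt_succ_iff, not_le] at hi
    exact hF.1 i j (Or.inr (Or.inr hi))

lemma length_canonSeq {M : FMat} (hF : IsFishburn M) :
    (canonSeq M).length = entrySum M := by
  rw [canonSeq_eq, length_cs, entrySum_eq hF]

lemma d_le_entrySum {M : FMat} (hF : IsFishburn M) : M.d ≤ entrySum M := by
  rw [entrySum]
  calc M.d = ∑ _i ∈ Finset.range M.d, 1 := by simp
  _ ≤ _ := by
    apply Finset.sum_le_sum
    intro i hi
    rw [Finset.mem_range] at hi
    obtain ⟨j, hj, hne⟩ := hF.2.1 i hi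
    calc 1 ≤ M.entry i j := Nat.one_le_iff_ne_zero.mpr hne
    _ ≤ _ := Finset.single_le_sum (f := fun j => M.entry i j)
        (fun _ _ => Nat.zero_le _) (Finset.mem_range.mpr hj)

/-! ### Ascents -/

lemma ascents_nil : ascents [] = 0 := rfl

lemma ascents_cons (x : ℕ) (u : List ℕ) :
    ascents (x :: u) = (if x < u.getD 0 0 then 1 else 0) + ascents u := by
  cases u with
  | nil => simp [ascents]
  | cons y v =>
    show ascents (x :: y :: v) = _
    rw [ascents, ascents]
    simp only [List.tail_cons, List.zip_cons_cons, List.filter_cons]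
    by_cases h : x < y
    · simp [h, List.getD_cons_zero]; omega
    · simp [h, List.getD_cons_zero]

lemma ascents_append_singleton {s : List ℕ} (a : ℕ) (hs : s ≠ []) :
    ascents (s ++ [a]) =
      ascents s + (if s.getD (s.length - 1) 0 < a then 1 else 0) := by
  induction s with
  | nil => exact absurd rfl hs
  | cons x s ih =>
    cases s with
    | nil =>
      rw [List.singleton_append, ascents_cons, ascents_cons]
      simp [ascents]
    | cons y v =>
      rw [List.cons_append, ascents_cons, ascents_cons, ih (by simp)]
      have h0 : ((y :: v) ++ [a]).getD 0 0 = (y :: v).getD 0 0 :=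
        List.getD_append _ _ _ _ (by simp)
      rw [h0]
      have hlen : (x :: y :: v).length - 1 = (y :: v).length := by simp
      rw [hlen]
      have : (x :: y :: v).getD (y :: v).length 0 = (y :: v).getD ((y :: v).length - 1) 0 := by
        have h2 : (y :: v).length = ((y :: v).length - 1) + 1 := by simp
        conv_lhs => rw [h2, List.getD_cons_succ]
      rw [this]
      omega

/-! ### Appending to sequences -/

lemma getD_append_lt {s : List ℕ} {t : List ℕ} {k : ℕ} (h : k < s.length) :
    (s ++ t).getD k 0 = s.getD k 0 := List.getD_append _ _ _ _ h

lemma getD_append_self {s : List ℕ} {a : ℕ} :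
    (s ++ [a]).getD s.length 0 = a := by
  rw [List.getD_append_right _ _ _ _ le_rfl, Nat.sub_self]
  rfl

lemma take_append_le {s : List ℕ} {t : List ℕ} {k : ℕ} (h : k ≤ s.length) :
    (s ++ t).take k = s.take k := List.take_append_of_le_length h

lemma isAscSeq_append {s : List ℕ} {a : ℕ} (hs : s ≠ []) :
    IsAscSeq (s ++ [a]) ↔ IsAscSeq s ∧ a ≤ ascents s + 1 := by
  have hlen : 0 < s.length := List.length_pos_iff.mpr hs
  constructor
  · rintro ⟨h0, h1⟩
    refine ⟨⟨?_, ?_⟩, ?_⟩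
    · rw [← getD_append_lt (t := [a]) hlen]; exact h0
    · intro k hk hk0
      have := h1 k (by rw [List.length_append]; omega) hk0
      rwa [getD_append_lt hk, take_append_le (le_of_lt hk)] at this
    · have := h1 s.length (by simp) hlen
      rwa [getD_append_self, take_append_le le_rfl, List.take_length] at this
  · rintro ⟨⟨h0, h1⟩, ha⟩
    constructor
    · rw [getD_append_lt hlen]; exact h0
    · intro k hk hk0
      rw [List.length_append, List.length_singleton] at hk
      by_cases hks : k < s.length
      · rw [getD_append_lt hks, take_append_le (le_of_lt hks)]
        exact h1 k hks hk0
      · have hks' : k = s.length := by omega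
        subst hks'
        rw [getD_append_self, take_append_le le_rfl, List.take_length]
        exact ha

lemma contains101_append {s : List ℕ} {a : ℕ} :
    Contains101 (s ++ [a]) ↔ Contains101 s ∨
      ∃ p q, p < q ∧ q < s.length ∧ s.getD p 0 = a ∧ s.getD q 0 < a := by
  constructor
  · rintro ⟨i, j, k, hij, hjk, hk, he, hl⟩
    rw [List.length_append, List.length_singleton] at hk
    by_cases hks : k < s.length
    · left
      refine ⟨i, j, k, hij, hjk, hks, ?_, ?_⟩
      · rwa [getD_append_lt (by omega), getD_append_lt hks] at he
      · rwa [getD_append_lt (by omega), getD_append_lt hks] at hl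
    · have hks' : k = s.length := by omega
      subst hks'
      rw [getD_append_self] at he hl
      right
      refine ⟨i, j, hij, hjk, ?_, ?_⟩
      · rwa [getD_append_lt (by omega)] at he
      · rwa [getD_append_lt (by omega)] at hl
  · rintro (⟨i, j, k, hij, hjk, hk, he, hl⟩ | ⟨p, q, hpq, hq, he, hl⟩)
    · refine ⟨i, j, k, hij, hjk, by simp; omega, ?_, ?_⟩
      · rwa [getD_append_lt (by omega), getD_append_lt hk]
      · rwa [getD_append_lt (by omega), getD_append_lt hk]
    · refine ⟨p, q, s.length, hpq, hq, by simp, ?_, ?_⟩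
      · rwa [getD_append_lt (by omega), getD_append_self]
      · rwa [getD_append_lt hq, getD_append_self]

/-! ### fAM -/

lemma fAM_append {s : List ℕ} {a : ℕ} (hs : s ≠ []) :
    fAM (s ++ [a]) = fStep (fAM s) a := by
  rw [fAM, fAM, List.tail_append]
  simp only [List.isEmpty_iff, hs, if_false]
  rw [List.foldl_append]
  rfl

/-! ### Fishburn matrix facts -/

lemma fish_le_of_ne {M : FMat} (hF : IsFishburn M) {i j : ℕ}
    (h : M.entry i j ≠ 0) : i ≤ j ∧ j < M.d ∧ i < M.d := by
  by_contra hc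
  push_neg at hc
  apply h
  apply hF.1
  by_cases h1 : i ≤ j
  · by_cases h2 : j < M.d
    · exact absurd (hc h1 h2) (by omega)
    · exact Or.inr (Or.inl (by omega))
  · exact Or.inr (Or.inr (by omega))

lemma fish_diag {M : FMat} (hF : IsFishburn M) (hS : SEFree M) {i : ℕ}
    (hi : i < M.d) : M.entry i i ≠ 0 := by
  obtain ⟨k, hk, hkne⟩ := hF.2.2 i hi
  have hki : k ≤ i := (fish_le_of_ne hF hkne).1
  rcases Nat.eq_or_lt_of_le hki with rfl | hklt
  · exact hkne
  · obtain ⟨c, hc, hcne⟩ := hF.2.1 i hi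
    have hic : i ≤ c := (fish_le_of_ne hF hcne).1
    rcases Nat.eq_or_lt_of_le hic with rfl | hilt
    · exact hcne
    · exact absurd ⟨k, i, i, c, hklt, hilt, le_rfl, hc, hkne, hcne⟩ hS

lemma FMat.ext' {M N : FMat} (hd : M.d = N.d) (he : M.entry = N.entry) : M = N := by
  cases M; cases N; cases hd; cases he; rfl

/-- Main converse theorem: every SE-free Fishburn matrix arises canonically. -/
theorem conv : ∀ n : ℕ, ∀ M : FMat, 1 ≤ n → IsFishburn M → SEFree M → entrySum M = n →
    IsAscSeq (canonSeq M) ∧ ¬Contains101 (canonSeq M) ∧ (canonSeq M).length = n ∧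
    ascents (canonSeq M) = M.d - 1 ∧ (canonSeq M).getD (n - 1) 0 = mindex M ∧
    fAM (canonSeq M) = M := by
  intro n
  induction n using Nat.strong_induction_on with
  | _ n ih =>
  intro M hn F S hsum
  -- basic facts
  have hd1 : 1 ≤ M.d := by
    by_contra h
    push_neg at h
    interval_cases hMd : M.d
    · rw [entrySum, hMd] at hsum
      simp at hsum
      omega
  obtain ⟨r0, hr0d, hr0⟩ := F.2.2 (M.d - 1) (by omega)
  have hSne : {i | M.entry i (M.d - 1) ≠ 0}.Nonempty := ⟨r0, hr0⟩
  have ha_mem : M.entry (mindex M) (M.d - 1) ≠ 0 := Nat.sInf_mem hSne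
  have ha_min : ∀ i, i < mindex M → M.entry i (M.d - 1) = 0 := by
    intro i hi
    by_contra hcon
    exact Nat.notMem_of_lt_sInf hi hcon
  have ha_le : mindex M ≤ M.d - 1 := (fish_le_of_ne F ha_mem).1
  rcases eq_or_lt_of_le hn with hn1 | hn2
  · -- base case n = 1
    have hd_eq : M.d = 1 := by
      have := d_le_entrySum F
      omega
    have he00 : M.entry 0 0 = 1 := by
      have := entrySum_eq F
      rw [hd_eq] at this
      simp at this
      omega
    have hzero : ∀ i j, ¬(i = 0 ∧ j = 0) → M.entry i j = 0 := by
      intro i j hij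
      apply F.1
      rw [hd_eq]
      omega
    have hcan : canonSeq M = [0] := by
      rw [canonSeq_eq, hd_eq]
      show cs M.entry (0 + 1) = [0]
      rw [cs_succ]
      show [] ++ blockOf M.entry 0 = [0]
      rw [List.nil_append, blockOf]
      simp [List.range_succ, he00]
    have hmind : mindex M = 0 := by
      have : mindex M ≤ 0 := Nat.sInf_le (by show M.entry 0 (M.d - 1) ≠ 0; rw [hd_eq]; simp [he00])
      omega
    rw [hcan]
    refine ⟨⟨by simp, ?_⟩, ?_, by simp [hn1.symm], by simp [ascents, hd_eq], ?_, ?_⟩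
    · intro k hk hk0; simp at hk; omega
    · rintro ⟨i, j, k, hij, hjk, hk, -, -⟩; simp at hk; omega
    · simp [← hn1, hmind]
    · have : fAM [0] = FMat.mk 1 (fun i j => if i = 0 ∧ j = 0 then 1 else 0) := rfl
      rw [this]
      apply FMat.ext' (by show (1 : ℕ) = M.d; omega)
      funext i j
      by_cases hij : i = 0 ∧ j = 0
      · obtain ⟨rfl, rfl⟩ := hij; simp [he00]
      · simp only [if_neg hij]
        exact (hzero i j hij).symm
  · -- inductive case n ≥ 2
    by_cases hcase : mindex M = M.d - 1 ∧ M.entry (M.d - 1) (M.d - 1) = 1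
    · -- shrink case
      obtain ⟨ha_eq, hone⟩ := hcase
      have hd2 : 2 ≤ M.d := by
        by_contra h
        push_neg at h
        have hd_eq : M.d = 1 := by omega
        have := entrySum_eq F
        rw [hd_eq] at this
        simp at this
        rw [hd_eq] at hone
        simp at hone
        omega
      set d' := M.d - 1 with hd'
      have hcol : ∀ i, i < d' → M.entry i d' = 0 := by
        intro i hi; exact ha_min i (by omega)
      have hrow : ∀ j, j < d' → M.entry d' j = 0 := by
        intro j hj; exact F.1 d' j (Or.inr (Or.inr hj))
      set Mm : FMat := ⟨d', fun i j => if i < d' ∧ j < d' then M.entry i j else 0⟩ with hMm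
      have hmdd : Mm.d = d' := rfl
      have hMme : ∀ i j, Mm.entry i j ≠ 0 → i < d' ∧ j < d' ∧ M.entry i j ≠ 0 := by
        intro i j h
        by_cases hin : i < d' ∧ j < d'
        · refine ⟨hin.1, hin.2, ?_⟩
          simpa [hMm, if_pos hin] using h
        · exfalso; apply h; simp [hMm, if_neg hin]
      have hMmeq : ∀ i j, i < d' → j < d' → Mm.entry i j = M.entry i j := by
        intro i j hi hj; simp [hMm, hi, hj]
      have Fm : IsFishburn Mm := by
        refine ⟨?_, ?_, ?_⟩
        · intro i j h
          show (if i < d' ∧ j < d' then M.entry i j else 0) = 0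
          by_cases hin : i < d' ∧ j < d'
          · rw [if_pos hin]
            apply F.1
            rcases h with h | h | h
            · omega
            · omega
            · exact Or.inr (Or.inr h)
          · rw [if_neg hin]
        · intro i hi
          obtain ⟨j, hj, hne⟩ := F.2.1 i (by omega)
          have hjd : j ≠ d' := by
            intro hj'
            rw [hj'] at hne
            exact hne (hcol i hi)
          refine ⟨j, by omega, ?_⟩
          rw [hMmeq i j hi (by omega)]
          exact hne
        · intro j hj
          obtain ⟨i, hi, hne⟩ := F.2.2 j (by omega)
          have hid : i ≠ d' := by
            intro hi'
            rw [hi'] at hne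
            exact hne (hrow j hj)
          refine ⟨i, by omega, ?_⟩
          rw [hMmeq i j (by omega) hj]
          exact hne
      have Sm : SEFree Mm := by
        rintro ⟨i, j, i', j', h1, h2, h3, h4, h5, h6⟩
        obtain ⟨-, -, h5'⟩ := hMme _ _ h5
        obtain ⟨-, hj'd, h6'⟩ := hMme _ _ h6
        exact S ⟨i, j, i', j', h1, h2, h3, by omega, h5', h6'⟩
      have hsumm : entrySum Mm = n - 1 := by
        have hM : entrySum M = entrySum Mm + 1 := by
          rw [entrySum, entrySum]
          have hdd : M.d = d' + 1 := by omega
          rw [hdd, Finset.sum_range_succ]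
          have hinner : ∀ i, i ∈ Finset.range d' → ∑ j ∈ Finset.range (d' + 1), M.entry i j
              = ∑ j ∈ Finset.range d', Mm.entry i j := by
            intro i hi
            rw [Finset.mem_range] at hi
            rw [Finset.sum_range_succ, hcol i hi, Nat.add_zero]
            apply Finset.sum_congr rfl
            intro j hj
            rw [Finset.mem_range] at hj
            exact (hMmeq i j hi hj).symm
          rw [Finset.sum_congr rfl hinner]
          have hlast : ∑ j ∈ Finset.range (d' + 1), M.entry d' j = 1 := by
            rw [Finset.sum_range_succ, hone]
            have : ∑ j ∈ Finset.range d', M.entry d' j = 0 :=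
              Finset.sum_eq_zero fun j hj => hrow j (Finset.mem_range.mp hj)
            rw [this]
          rw [hlast]
        omega
      obtain ⟨A1, A2, A3, A4, A5, A6⟩ := ih (n - 1) (by omega) Mm (by omega) Fm Sm hsumm
      have hlm : canonSeq Mm = cs M.entry d' := by
        rw [canonSeq_eq]
        show cs Mm.entry d' = cs M.entry d'
        apply flatMap_congr
        intro j hj
        rw [List.mem_range] at hj
        apply blockOf_congr
        intro i hi
        exact hMmeq i j (by omega) hj
      have hl : canonSeq M = canonSeq Mm ++ [d'] := by
        rw [canonSeq_eq]
        have hdd : M.d = d' + 1 := by omega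
        rw [hdd, cs_succ, hlm]
        congr 1
        rw [blockOf_split_low le_rfl hcol]
        simp [hone]
      have hlenm : (canonSeq Mm).length = n - 1 := A3
      have hne : canonSeq Mm ≠ [] := by
        intro h
        rw [h] at hlenm
        simp at hlenm
        omega
      have hlen : (canonSeq M).length = n := by
        rw [hl, List.length_append, hlenm]
        simp
        omega
      have hmindm_lt : mindex Mm < d' := by
        obtain ⟨rm, hrmd, hrm⟩ := Fm.2.2 (Mm.d - 1) (by omega)
        have hmm : mindex Mm = sInf {i | Mm.entry i (Mm.d - 1) ≠ 0} := rfl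
        have h2 := Nat.sInf_mem (⟨rm, hrm⟩ : {i | Mm.entry i (Mm.d - 1) ≠ 0}.Nonempty)
        have h3 := (fish_le_of_ne Fm h2).1
        omega
      have hlast : (canonSeq Mm).getD ((canonSeq Mm).length - 1) 0 = mindex Mm := by
        rw [hlenm]
        exact A5
      constructor
      · -- IsAscSeq
        rw [hl, isAscSeq_append hne]
        refine ⟨A1, ?_⟩
        rw [A4]
        show d' ≤ Mm.d - 1 + 1
        omega
      constructor
      · -- no 101
        rw [hl, contains101_append]
        rintro (h | ⟨p, q, hpq, hq, hp, hql⟩)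
        · exact A2 h
        · have hq2 : q < (cs Mm.entry Mm.d).length := hq
          obtain ⟨v, w, c, c', hv, hw, hvc, hwc, hcd, hcd', hvne, hwne, -⟩ :=
            cs_pos_spec hpq hq2
          have hp2 : (cs Mm.entry Mm.d).getD p 0 = d' := hp
          rw [hv] at hp2
          omega
      constructor
      · exact hlen
      constructor
      · -- ascents
        rw [hl, ascents_append_singleton _ hne, hlast, A4]
        have : mindex Mm < d' := hmindm_lt
        have hmd : Mm.d = d' := rfl
        rw [if_pos (by omega)]
        omega
      constructor
      · -- last element
        rw [hl]
        have : n - 1 = (canonSeq Mm).length := hlenm.symm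
        rw [this, getD_append_self]
        omega
      · -- fAM
        rw [hl, fAM_append hne, A6]
        rw [fStep]
        have hmind : mindex Mm < d' := hmindm_lt
        rw [if_neg (by show ¬(d' ≤ mindex Mm); omega), if_pos rfl]
        apply FMat.ext' (by show d' + 1 = M.d; omega)
        funext i j
        show (if i = Mm.d ∨ j = Mm.d then (if i = Mm.d ∧ j = Mm.d then 1 else 0)
          else Mm.entry i j) = M.entry i j
        have hmd : Mm.d = d' := rfl
        rw [hmd]
        by_cases hij : i = d' ∨ j = d'
        · rw [if_pos hij]
          by_cases hij2 : i = d' ∧ j = d'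
          · rw [if_pos hij2]
            obtain ⟨rfl, rfl⟩ := hij2
            exact hone.symm
          · rw [if_neg hij2]
            symm
            rcases hij with rfl | rfl
            · -- i = d', j ≠ d'
              have hjne : j ≠ d' := fun h => hij2 ⟨rfl, h⟩
              by_cases hjlt : j < d'
              · exact hrow j hjlt
              · exact F.1 _ _ (Or.inr (Or.inl (by omega)))
            · have hine : i ≠ d' := fun h => hij2 ⟨h, rfl⟩
              by_cases hilt : i < d'
              · exact hcol i hilt
              · exact F.1 _ _ (Or.inl (by omega))
        · rw [if_neg hij]
          push_neg at hij
          show (if i < d' ∧ j < d' then M.entry i j else 0) = M.entry i j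
          by_cases hin : i < d' ∧ j < d'
          · rw [if_pos hin]
          · rw [if_neg hin]
            symm
            apply F.1
            push_neg at hin
            by_cases hilt : i < d'
            · exact Or.inr (Or.inl (by have := hin hilt; omega))
            · exact Or.inl (by omega)
    · -- decrement case
      -- decrement case
      have hc0 : 1 ≤ M.entry (mindex M) (M.d - 1) := Nat.one_le_iff_ne_zero.mpr ha_mem
      have hkeep : mindex M < M.d - 1 ∨ 2 ≤ M.entry (mindex M) (M.d - 1) := by
        by_cases h1 : mindex M = M.d - 1
        · right
          rcases Nat.lt_or_ge (M.entry (M.d - 1) (M.d - 1)) 2 with h2 | h2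
          · exfalso
            apply hcase
            refine ⟨h1, ?_⟩
            have hma := ha_mem
            rw [h1] at hma
            omega
          · rw [h1]; exact h2
        · left; omega
      set a := mindex M with ha_def
      set Mm : FMat := ⟨M.d, fun i j =>
        M.entry i j - if i = a ∧ j = M.d - 1 then 1 else 0⟩ with hMm
      have hmdd : Mm.d = M.d := rfl
      have hMmeq : ∀ i j, ¬(i = a ∧ j = M.d - 1) → Mm.entry i j = M.entry i j := by
        intro i j h
        show M.entry i j - (if i = a ∧ j = M.d - 1 then 1 else 0) = M.entry i j
        rw [if_neg h]
        omega
      have hMma : Mm.entry a (M.d - 1) = M.entry a (M.d - 1) - 1 := by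
        show M.entry a (M.d - 1) - (if a = a ∧ M.d - 1 = M.d - 1 then 1 else 0) = _
        rw [if_pos ⟨rfl, rfl⟩]
      have hsub : ∀ i j, Mm.entry i j ≠ 0 → M.entry i j ≠ 0 := by
        intro i j h
        show M.entry i j ≠ 0
        have : Mm.entry i j = M.entry i j - (if i = a ∧ j = M.d - 1 then 1 else 0) := rfl
        rw [this] at h
        omega
      have hdiagd : M.entry (M.d - 1) (M.d - 1) ≠ 0 := fish_diag F S (by omega)
      have Fm : IsFishburn Mm := by
        refine ⟨?_, ?_, ?_⟩
        · intro i j h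
          show M.entry i j - (if i = a ∧ j = M.d - 1 then 1 else 0) = 0
          rw [F.1 i j (by rw [hmdd] at h; exact h)]
          omega
        · intro i hi
          rw [hmdd] at hi
          by_cases hia : i = a
          · rcases hkeep with hlt | h2
            · refine ⟨i, by omega, ?_⟩
              rw [hMmeq i i (fun h => by omega)]
              exact fish_diag F S hi
            · refine ⟨M.d - 1, by omega, ?_⟩
              rw [hia, hMma]; omega
          · obtain ⟨j, hj, hne⟩ := F.2.1 i hi
            refine ⟨j, by omega, ?_⟩
            rw [hMmeq i j (fun h => hia h.1)]
            exact hne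
        · intro j hj
          rw [hmdd] at hj
          by_cases hjd : j = M.d - 1
          · subst hjd
            rcases hkeep with hlt | h2
            · refine ⟨M.d - 1, by omega, ?_⟩
              rw [hMmeq _ _ (fun h => by omega)]
              exact hdiagd
            · refine ⟨a, by omega, ?_⟩
              rw [hMma]; omega
          · obtain ⟨i, hi, hne⟩ := F.2.2 j hj
            refine ⟨i, by omega, ?_⟩
            rw [hMmeq i j (fun h => hjd h.2)]
            exact hne
      have Sm : SEFree Mm := by
        rintro ⟨i, j, i', j', h1, h2, h3, h4, h5, h6⟩
        exact S ⟨i, j, i', j', h1, h2, h3, by omega, hsub _ _ h5, hsub _ _ h6⟩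
      have hsumm : entrySum Mm = n - 1 := by
        have hdelta : ∀ i, ∑ j ∈ Finset.range M.d, (if i = a ∧ j = M.d - 1 then 1 else 0) =
            (if i = a then (1:ℕ) else 0) := by
          intro i
          by_cases hia : i = a
          · rw [if_pos hia]
            have hh : ∀ j, (if i = a ∧ j = M.d - 1 then (1:ℕ) else 0) =
                if j = M.d - 1 then 1 else 0 := by
              intro j
              by_cases hj : j = M.d - 1
              · rw [if_pos ⟨hia, hj⟩, if_pos hj]
              · rw [if_neg (fun h => hj h.2), if_neg hj]
            rw [Finset.sum_congr rfl (fun j _ => hh j)]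
            rw [Finset.sum_ite_eq' (Finset.range M.d) (M.d - 1) (fun _ => (1:ℕ))]
            rw [if_pos (Finset.mem_range.mpr (by omega))]
          · rw [if_neg hia]
            apply Finset.sum_eq_zero
            intro j _
            rw [if_neg (fun h => hia h.1)]
        have hinner : ∀ i, ∑ j ∈ Finset.range M.d, Mm.entry i j =
            ∑ j ∈ Finset.range M.d, M.entry i j - (if i = a then 1 else 0) := by
          intro i
          have hle : ∀ j ∈ Finset.range M.d,
              (if i = a ∧ j = M.d - 1 then 1 else 0) ≤ M.entry i j := by
            intro j _
            by_cases h : i = a ∧ j = M.d - 1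
            · rw [if_pos h, h.1, h.2]; exact hc0
            · rw [if_neg h]; omega
          calc ∑ j ∈ Finset.range M.d, Mm.entry i j
              = ∑ j ∈ Finset.range M.d,
                (M.entry i j - (if i = a ∧ j = M.d - 1 then 1 else 0)) := rfl
            _ = ∑ j ∈ Finset.range M.d, M.entry i j -
                ∑ j ∈ Finset.range M.d, (if i = a ∧ j = M.d - 1 then 1 else 0) :=
                Finset.sum_tsub_distrib _ hle
            _ = _ := by rw [hdelta i]
        have houter : entrySum Mm = entrySum M - 1 := by
          simp only [entrySum, hmdd]
          rw [Finset.sum_congr rfl (fun i _ => hinner i)]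
          have hle2 : ∀ i ∈ Finset.range M.d,
              (if i = a then 1 else 0) ≤ ∑ j ∈ Finset.range M.d, M.entry i j := by
            intro i _
            by_cases hia : i = a
            · rw [if_pos hia, hia]
              calc 1 ≤ M.entry a (M.d - 1) := hc0
                _ ≤ _ := Finset.single_le_sum (f := fun j => M.entry a j)
                    (fun _ _ => Nat.zero_le _) (Finset.mem_range.mpr (by omega))
            · rw [if_neg hia]; omega
          rw [Finset.sum_tsub_distrib _ hle2]
          congr 1
          rw [Finset.sum_ite_eq' (Finset.range M.d) a (fun _ => (1:ℕ))]
          rw [if_pos (Finset.mem_range.mpr (by omega))]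
        omega
      have hcolm : ∀ i, i < a → Mm.entry i (M.d - 1) = 0 := by
        intro i hi
        rw [hMmeq i _ (fun h => by omega)]
        exact ha_min i hi
      have hnem : {i | Mm.entry i (Mm.d - 1) ≠ 0}.Nonempty := by
        rw [hmdd]
        rcases hkeep with hlt | h2
        · refine ⟨M.d - 1, ?_⟩
          show Mm.entry (M.d - 1) (M.d - 1) ≠ 0
          rw [hMmeq _ _ (fun h => by omega)]
          exact hdiagd
        · refine ⟨a, ?_⟩
          show Mm.entry a (M.d - 1) ≠ 0
          rw [hMma]
          omega
      have hminm : a ≤ mindex Mm := by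
        have hmm : mindex Mm = sInf {i | Mm.entry i (Mm.d - 1) ≠ 0} := rfl
        rw [hmm]
        apply le_csInf hnem
        intro b hb
        by_contra hba
        push_neg at hba
        apply hb
        rw [hmdd]
        exact hcolm b hba
      obtain ⟨A1, A2, A3, A4, A5, A6⟩ := ih (n - 1) (by omega) Mm (by omega) Fm Sm hsumm
      -- canonical sequence split
      have hl : canonSeq M = canonSeq Mm ++ [a] := by
        rw [canonSeq_eq, canonSeq_eq, hmdd]
        have hdd : M.d = (M.d - 1) + 1 := by omega
        rw [hdd, cs_succ, cs_succ]
        have hpre : cs M.entry (M.d - 1) = cs Mm.entry (M.d - 1) := by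
          apply flatMap_congr
          intro j hj
          rw [List.mem_range] at hj
          apply blockOf_congr
          intro i hi
          exact (hMmeq i j (fun h => by omega)).symm
        have hblock : blockOf M.entry (M.d - 1) = blockOf Mm.entry (M.d - 1) ++ [a] := by
          rw [blockOf_split_low ha_le ha_min, blockOf_split_low (e := Mm.entry) ha_le hcolm]
          have hT : ((List.map (fun t => a + 1 + t) (List.range (M.d - 1 - a))).reverse.flatMap
              (fun i => List.replicate (M.entry i (M.d - 1)) i)) =
              ((List.map (fun t => a + 1 + t) (List.range (M.d - 1 - a))).reverse.flatMap
              (fun i => List.replicate (Mm.entry i (M.d - 1)) i)) := by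
            apply flatMap_congr
            intro x hx
            rw [List.mem_reverse, List.mem_map] at hx
            obtain ⟨t, -, rfl⟩ := hx
            rw [hMmeq _ _ (fun h => by omega)]
          rw [hT, hMma, List.append_assoc]
          congr 1
          have : M.entry a (M.d - 1) = (M.entry a (M.d - 1) - 1) + 1 := by omega
          rw [this, List.replicate_succ']
          simp
        rw [hpre, hblock, List.append_assoc]
      have hlenm : (canonSeq Mm).length = n - 1 := A3
      have hne : canonSeq Mm ≠ [] := by
        intro h; rw [h] at hlenm; simp at hlenm; omega
      have hlast : (canonSeq Mm).getD ((canonSeq Mm).length - 1) 0 = mindex Mm := by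
        rw [hlenm]; exact A5
      constructor
      · rw [hl, isAscSeq_append hne]
        refine ⟨A1, ?_⟩
        rw [A4, hmdd]
        omega
      constructor
      · rw [hl, contains101_append]
        rintro (h | ⟨p, q, hpq, hq, hp, hql⟩)
        · exact A2 h
        · have hq2 : q < (cs Mm.entry Mm.d).length := hq
          obtain ⟨v, w, c, c', hv, hw, hvc, hwc, hcd, hcd', hvne, hwne, hord⟩ :=
            cs_pos_spec hpq hq2
          have hp2 : (cs Mm.entry Mm.d).getD p 0 = a := hp
          have hq3 : (cs Mm.entry Mm.d).getD q 0 < a := hql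
          rw [hv] at hp2
          rw [hw] at hq3
          subst hp2
          -- w < a, entries (a,c), (w,c') in Mm, c ≤ c'
          have hcc' : c ≤ c' := by rcases hord with h | ⟨h, -⟩ <;> omega
          have hwa : w < a := hq3
          have hc'd : c' < M.d - 1 := by
            rcases Nat.lt_or_ge c' (M.d - 1) with h | h
            · exact h
            · exfalso
              have hc'eq : c' = M.d - 1 := by rw [hmdd] at hcd'; omega
              have h0 := hcolm w hwa
              rw [← hc'eq] at h0
              exact hwne h0
          apply S
          refine ⟨w, c', a, M.d - 1, hwa, hc'd, by omega, by omega,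
            hsub _ _ hwne, ha_mem⟩
      constructor
      · rw [hl, List.length_append, hlenm]; simp; omega
      constructor
      · rw [hl, ascents_append_singleton _ hne, hlast, A4, hmdd]
        rw [if_neg (by omega)]
        omega
      constructor
      · rw [hl]
        have : n - 1 = (canonSeq Mm).length := hlenm.symm
        rw [this, getD_append_self]
      · rw [hl, fAM_append hne, A6, fStep, if_pos hminm]
        refine FMat.ext' ?_ ?_
        · exact hmdd
        funext i j
        show Mm.entry i j + (if i = a ∧ j = Mm.d - 1 then 1 else 0) = M.entry i j
        rw [hmdd]
        show (M.entry i j - if i = a ∧ j = M.d - 1 then 1 else 0) +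
          (if i = a ∧ j = M.d - 1 then 1 else 0) = M.entry i j
        by_cases h : i = a ∧ j = M.d - 1
        · rw [if_pos h]
          obtain ⟨rfl, rfl⟩ := h
          omega
        · rw [if_neg h]
          omega


/-- Produce a 101 pattern after appending `x`, given suitable nonzero entries. -/
lemma contains101_of_entries {M : FMat} {s : List ℕ} (hs : s = canonSeq M)
    {x w c c' : ℕ} (hxc : x ≤ c) (hwc : w ≤ c') (hc : c < M.d) (hc' : c' < M.d)
    (hx : M.entry x c ≠ 0) (hw : M.entry w c' ≠ 0)
    (hord : c < c' ∨ (c = c' ∧ w < x)) (hwx : w < x) :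
    Contains101 (s ++ [x]) := by
  obtain ⟨p, q, hpq, hq, hp, hqw⟩ :=
    cs_pos_exists (d := M.d) hxc hwc hc hc' hx hw hord
  have hs' : s = cs M.entry M.d := hs
  rw [contains101_append]
  right
  refine ⟨p, q, hpq, ?_, ?_, ?_⟩
  · rw [hs']; exact hq
  · rw [hs']; exact hp
  · rw [hs', hqw]; exact hwx

/-- Forward structure theorem. -/
theorem fwd : ∀ l : List ℕ, IsAscSeq l → ¬Contains101 l →
    ∃ M : FMat, IsFishburn M ∧ SEFree M ∧ entrySum M = l.length ∧ l = canonSeq M := by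
  intro l
  induction l using List.reverseRecOn with
  | nil =>
    intro _ _
    refine ⟨⟨0, fun _ _ => 0⟩, ⟨fun i j _ => rfl, ?_, ?_⟩, ?_, ?_, ?_⟩
    · intro i hi; exact absurd hi (by show ¬ i < (0:ℕ); omega)
    · intro j hj; exact absurd hj (by show ¬ j < (0:ℕ); omega)
    · rintro ⟨i, j, i', j', -, -, -, h4, -, -⟩
      exact absurd h4 (by show ¬ j' < (0:ℕ); omega)
    · simp [entrySum]
    · rfl
  | append_singleton s x ih =>
    intro hasc h101
    by_cases hsnil : s = []
    · subst hsnil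
      have hx0 : x = 0 := by
        have := hasc.1
        simpa using this
      subst hx0
      refine ⟨⟨1, fun i j => if i = 0 ∧ j = 0 then 1 else 0⟩, ⟨?_, ?_, ?_⟩, ?_, ?_, ?_⟩
      · intro i j h
        have h' : 1 ≤ i ∨ 1 ≤ j ∨ j < i := h
        show (if i = 0 ∧ j = 0 then 1 else 0) = 0
        rw [if_neg (by omega)]
      · intro i hi
        have hi' : i < 1 := hi
        refine ⟨0, (by show (0:ℕ) < 1; omega), ?_⟩
        show (if i = 0 ∧ 0 = 0 then 1 else 0) ≠ 0
        have hi0 : i = 0 := by omega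
        rw [if_pos ⟨hi0, rfl⟩]
        omega
      · intro j hj
        have hj' : j < 1 := hj
        refine ⟨0, (by show (0:ℕ) < 1; omega), ?_⟩
        show (if 0 = 0 ∧ j = 0 then 1 else 0) ≠ 0
        have hj0 : j = 0 := by omega
        rw [if_pos ⟨rfl, hj0⟩]
        omega
      · rintro ⟨i, j, i', j', h1, h2, h3, h4, -, -⟩
        have h4' : j' < 1 := h4
        omega
      · show (∑ i ∈ Finset.range 1, ∑ j ∈ Finset.range 1,
          (if i = 0 ∧ j = 0 then 1 else 0)) = 1
        decide
      · show [0] = cs _ 1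
        rw [show (1 : ℕ) = 0 + 1 from rfl, cs_succ]
        show [0] = [] ++ blockOf _ 0
        rw [List.nil_append, blockOf]
        simp [List.range_succ]
    · -- s nonempty
      have hpre : IsAscSeq s ∧ x ≤ ascents s + 1 := (isAscSeq_append hsnil).mp hasc
      have h101s : ¬Contains101 s := fun h =>
        h101 (contains101_append.mpr (Or.inl h))
      obtain ⟨M', F', S', hsum', hseq'⟩ := ih hpre.1 h101s
      have hlen1 : 1 ≤ s.length := by
        cases s with
        | nil => exact absurd rfl hsnil
        | cons _ _ => simp
      obtain ⟨A1, A2, A3, A4, A5, A6⟩ :=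
        conv s.length M' hlen1 F' S' hsum'
      have hd1 : 1 ≤ M'.d := by
        by_contra h
        push_neg at h
        have hd0 : M'.d = 0 := by omega
        rw [entrySum, hd0] at hsum'
        simp at hsum'
        omega
      have hasc_s : ascents s = M'.d - 1 := by rw [hseq']; exact A4
      have hxle : x ≤ M'.d := by
        have := hpre.2
        omega
      -- mindex facts for M'
      obtain ⟨r0, hr0d, hr0⟩ := F'.2.2 (M'.d - 1) (by omega)
      have hSne' : {i | M'.entry i (M'.d - 1) ≠ 0}.Nonempty := ⟨r0, hr0⟩
      have hr_mem : M'.entry (mindex M') (M'.d - 1) ≠ 0 := Nat.sInf_mem hSne'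
      have hr_min : ∀ i, i < mindex M' → M'.entry i (M'.d - 1) = 0 := by
        intro i hi
        by_contra hcon
        exact Nat.notMem_of_lt_sInf hi hcon
      have hr_le : mindex M' ≤ M'.d - 1 := (fish_le_of_ne F' hr_mem).1
      -- exclude the middle case
      have hmid : ¬(mindex M' < x ∧ x < M'.d) := by
        rintro ⟨hrx, hxd⟩
        apply h101
        apply contains101_of_entries hseq' (c := x) (c' := M'.d - 1)
          le_rfl hr_le hxd (by omega) (fish_diag F' S' hxd) hr_mem ?_ hrx
        rcases Nat.lt_or_ge x (M'.d - 1) with h | h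
        · exact Or.inl h
        · exact Or.inr ⟨by omega, hrx⟩
      rcases Nat.lt_or_ge x M'.d with hxlt | hxge
      · -- AM1 case : x ≤ mindex M'
        have hxr : x ≤ mindex M' := by
          by_contra h
          exact hmid ⟨by omega, hxlt⟩
        set M : FMat := ⟨M'.d, fun i j =>
          M'.entry i j + if i = x ∧ j = M'.d - 1 then 1 else 0⟩ with hM
        have hmd : M.d = M'.d := rfl
        have hMeq : ∀ i j, ¬(i = x ∧ j = M'.d - 1) → M.entry i j = M'.entry i j := by
          intro i j h
          show M'.entry i j + (if i = x ∧ j = M'.d - 1 then 1 else 0) = M'.entry i j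
          rw [if_neg h]
          omega
        have hMx : M.entry x (M'.d - 1) = M'.entry x (M'.d - 1) + 1 := by
          show M'.entry x (M'.d - 1) + (if x = x ∧ M'.d - 1 = M'.d - 1 then 1 else 0) = _
          rw [if_pos ⟨rfl, rfl⟩]
        have hsup : ∀ i j, M.entry i j ≠ 0 →
            M'.entry i j ≠ 0 ∨ (i = x ∧ j = M'.d - 1) := by
          intro i j h
          by_cases hij : i = x ∧ j = M'.d - 1
          · exact Or.inr hij
          · left; rw [← hMeq i j hij]; exact h
        have hge : ∀ i j, M'.entry i j ≤ M.entry i j := by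
          intro i j
          show _ ≤ M'.entry i j + _
          omega
        have F : IsFishburn M := by
          refine ⟨?_, ?_, ?_⟩
          · intro i j h
            rw [hmd] at h
            show M'.entry i j + (if i = x ∧ j = M'.d - 1 then 1 else 0) = 0
            rw [F'.1 i j h, if_neg ?_]
            rintro ⟨rfl, rfl⟩
            omega
          · intro i hi
            rw [hmd] at hi
            obtain ⟨j, hj, hne⟩ := F'.2.1 i hi
            exact ⟨j, by omega, by have := hge i j; omega⟩
          · intro j hj
            rw [hmd] at hj
            obtain ⟨i, hi, hne⟩ := F'.2.2 j hj
            exact ⟨i, by omega, by have := hge i j; omega⟩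
        have S : SEFree M := by
          rintro ⟨i, j, i', j', h1, h2, h3, h4, h5, h6⟩
          rw [hmd] at h4
          rcases hsup _ _ h5 with h5' | ⟨hi5, hj5⟩
          · rcases hsup _ _ h6 with h6' | ⟨hi6, hj6⟩
            · exact S' ⟨i, j, i', j', h1, h2, h3, h4, h5', h6'⟩
            · -- new entry as the south-east element: (i', j') = (x, M'.d - 1)
              apply h101
              have hjle := (fish_le_of_ne F' h5').1
              have hjlt := (fish_le_of_ne F' h5').2.1
              have hixlt : i < x := by omega
              apply contains101_of_entries hseq' (c := x) (c' := j)
                le_rfl hjle (by omega) (by omega)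
                (fish_diag F' S' (by omega)) h5' ?_ hixlt
              rcases Nat.lt_or_ge x j with h | h
              · exact Or.inl h
              · exact Or.inr ⟨by omega, hixlt⟩
          · -- (i, j) is the new entry : impossible since j' > j = M'.d - 1
            omega
        have hsum : entrySum M = s.length + 1 := by
          have hdelta : ∀ i, ∑ j ∈ Finset.range M'.d,
              (if i = x ∧ j = M'.d - 1 then 1 else 0) =
              (if i = x then (1:ℕ) else 0) := by
            intro i
            by_cases hix : i = x
            · rw [if_pos hix]
              have hh : ∀ j, (if i = x ∧ j = M'.d - 1 then (1:ℕ) else 0) =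
                  if j = M'.d - 1 then 1 else 0 := by
                intro j
                by_cases hj : j = M'.d - 1
                · rw [if_pos ⟨hix, hj⟩, if_pos hj]
                · rw [if_neg (fun h => hj h.2), if_neg hj]
              rw [Finset.sum_congr rfl (fun j _ => hh j)]
              rw [Finset.sum_ite_eq' (Finset.range M'.d) (M'.d - 1) (fun _ => (1:ℕ))]
              rw [if_pos (Finset.mem_range.mpr (by omega))]
            · rw [if_neg hix]
              apply Finset.sum_eq_zero
              intro j _
              rw [if_neg (fun h => hix h.1)]
          have : entrySum M = entrySum M' + 1 := by
            simp only [entrySum, hmd]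
            have hinner : ∀ i, ∑ j ∈ Finset.range M'.d, M.entry i j =
                ∑ j ∈ Finset.range M'.d, M'.entry i j + (if i = x then 1 else 0) := by
              intro i
              calc ∑ j ∈ Finset.range M'.d, M.entry i j
                  = ∑ j ∈ Finset.range M'.d, (M'.entry i j +
                    (if i = x ∧ j = M'.d - 1 then 1 else 0)) := rfl
                _ = ∑ j ∈ Finset.range M'.d, M'.entry i j +
                    ∑ j ∈ Finset.range M'.d, (if i = x ∧ j = M'.d - 1 then 1 else 0) :=
                    Finset.sum_add_distrib
                _ = _ := by rw [hdelta i]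
            rw [Finset.sum_congr rfl (fun i _ => hinner i), Finset.sum_add_distrib]
            congr 1
            rw [Finset.sum_ite_eq' (Finset.range M'.d) x (fun _ => (1:ℕ))]
            rw [if_pos (Finset.mem_range.mpr (by omega))]
          omega
        refine ⟨M, F, S, by rw [hsum]; simp, ?_⟩
        -- s ++ [x] = canonSeq M
        have hcol0 : ∀ i, i < x → M'.entry i (M'.d - 1) = 0 := by
          intro i hi
          exact hr_min i (by omega)
        have hcol0M : ∀ i, i < x → M.entry i (M'.d - 1) = 0 := by
          intro i hi
          rw [hMeq i _ (fun h => by omega)]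
          exact hcol0 i hi
        have hxle' : x ≤ M'.d - 1 := by omega
        have hblock : blockOf M.entry (M'.d - 1) = blockOf M'.entry (M'.d - 1) ++ [x] := by
          rw [blockOf_split_low hxle' hcol0M, blockOf_split_low hxle' hcol0]
          have hT : ((List.map (fun t => x + 1 + t) (List.range (M'.d - 1 - x))).reverse.flatMap
              (fun i => List.replicate (M.entry i (M'.d - 1)) i)) =
              ((List.map (fun t => x + 1 + t) (List.range (M'.d - 1 - x))).reverse.flatMap
              (fun i => List.replicate (M'.entry i (M'.d - 1)) i)) := by
            apply flatMap_congr
            intro y hy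
            rw [List.mem_reverse, List.mem_map] at hy
            obtain ⟨t, -, rfl⟩ := hy
            rw [hMeq _ _ (fun h => by omega)]
          rw [hT, hMx, List.replicate_succ', List.append_assoc]
        have hpre2 : cs M.entry (M'.d - 1) = cs M'.entry (M'.d - 1) := by
          apply flatMap_congr
          intro j hj
          rw [List.mem_range] at hj
          apply blockOf_congr
          intro i hi
          exact hMeq i j (fun h => by omega)
        have : canonSeq M = canonSeq M' ++ [x] := by
          rw [canonSeq_eq, canonSeq_eq, hmd]
          have hdd : M'.d = (M'.d - 1) + 1 := by omega
          rw [hdd, cs_succ, cs_succ]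
          rw [hpre2, hblock]
          rw [List.append_assoc]
        rw [this, ← hseq']
      · -- AM2 case : x = M'.d
        have hxd : x = M'.d := by omega
        subst hxd
        set M : FMat := ⟨M'.d + 1, fun i j =>
          if i = M'.d ∨ j = M'.d then (if i = M'.d ∧ j = M'.d then 1 else 0)
          else M'.entry i j⟩ with hM
        have hmd : M.d = M'.d + 1 := rfl
        have hment : ∀ i j, M.entry i j ≠ 0 →
            (i = M'.d ∧ j = M'.d) ∨ (i ≠ M'.d ∧ j ≠ M'.d ∧ M'.entry i j ≠ 0) := by
          intro i j h
          show _ ∨ _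
          by_cases hij : i = M'.d ∨ j = M'.d
          · left
            by_contra hc
            apply h
            show (if i = M'.d ∨ j = M'.d then (if i = M'.d ∧ j = M'.d then 1 else 0)
              else M'.entry i j) = 0
            rw [if_pos hij, if_neg hc]
          · right
            push_neg at hij
            refine ⟨hij.1, hij.2, ?_⟩
            have : M.entry i j = M'.entry i j := by
              show (if i = M'.d ∨ j = M'.d then _ else M'.entry i j) = M'.entry i j
              rw [if_neg (by push_neg; exact hij)]
            rw [← this]
            exact h
        have hmm : M.entry M'.d M'.d = 1 := by
          show (if M'.d = M'.d ∨ M'.d = M'.d then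
            (if M'.d = M'.d ∧ M'.d = M'.d then 1 else 0) else _) = 1
          rw [if_pos (Or.inl rfl), if_pos ⟨rfl, rfl⟩]
        have hold : ∀ i j, i ≠ M'.d → j ≠ M'.d → M.entry i j = M'.entry i j := by
          intro i j hi hj
          show (if i = M'.d ∨ j = M'.d then _ else M'.entry i j) = M'.entry i j
          rw [if_neg (by push_neg; exact ⟨hi, hj⟩)]
        have F : IsFishburn M := by
          refine ⟨?_, ?_, ?_⟩
          · intro i j h
            rw [hmd] at h
            by_contra hne
            rcases hment i j hne with ⟨rfl, rfl⟩ | ⟨hi, hj, hne'⟩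
            · omega
            · have := fish_le_of_ne F' hne'
              omega
          · intro i hi
            rw [hmd] at hi
            by_cases hid : i = M'.d
            · refine ⟨M'.d, by omega, ?_⟩
              rw [hid, hmm]
              omega
            · obtain ⟨j, hj, hne⟩ := F'.2.1 i (by omega)
              refine ⟨j, by omega, ?_⟩
              rw [hold i j hid (by omega)]
              exact hne
          · intro j hj
            rw [hmd] at hj
            by_cases hjd : j = M'.d
            · refine ⟨M'.d, by omega, ?_⟩
              rw [hjd, hmm]
              omega
            · obtain ⟨i, hi, hne⟩ := F'.2.2 j (by omega)
              refine ⟨i, by omega, ?_⟩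
              rw [hold i j (by omega) hjd]
              exact hne
        have S : SEFree M := by
          rintro ⟨i, j, i', j', h1, h2, h3, h4, h5, h6⟩
          rw [hmd] at h4
          rcases hment _ _ h5 with ⟨rfl, rfl⟩ | ⟨hi, hj, h5'⟩
          · omega
          · rcases hment _ _ h6 with ⟨rfl, rfl⟩ | ⟨hi', hj', h6'⟩
            · have := fish_le_of_ne F' h5'
              omega
            · have := fish_le_of_ne F' h6'
              exact S' ⟨i, j, i', j', h1, h2, h3, by omega, h5', h6'⟩
        have hsum : entrySum M = s.length + 1 := by
          have : entrySum M = entrySum M' + 1 := by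
            simp only [entrySum, hmd]
            rw [Finset.sum_range_succ]
            have hlastrow : ∑ j ∈ Finset.range (M'.d + 1), M.entry M'.d j = 1 := by
              rw [Finset.sum_range_succ, hmm]
              have : ∑ j ∈ Finset.range M'.d, M.entry M'.d j = 0 := by
                apply Finset.sum_eq_zero
                intro j hj
                rw [Finset.mem_range] at hj
                show (if M'.d = M'.d ∨ j = M'.d then
                  (if M'.d = M'.d ∧ j = M'.d then 1 else 0) else _) = 0
                rw [if_pos (Or.inl rfl), if_neg (by omega)]
              rw [this]
            rw [hlastrow]
            congr 1
            apply Finset.sum_congr rfl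
            intro i hi
            rw [Finset.mem_range] at hi
            rw [Finset.sum_range_succ]
            have hz : M.entry i M'.d = 0 := by
              show (if i = M'.d ∨ M'.d = M'.d then
                (if i = M'.d ∧ M'.d = M'.d then 1 else 0) else _) = 0
              rw [if_pos (Or.inr rfl), if_neg (by omega)]
            have hz' : (if i = M'.d ∨ M'.d = M'.d then
                (if i = M'.d ∧ M'.d = M'.d then (1:ℕ) else 0) else M'.entry i M'.d) = 0 := hz
            rw [hz, Nat.add_zero]
            apply Finset.sum_congr rfl
            intro j hj
            rw [Finset.mem_range] at hj
            exact hold i j (by omega) (by omega)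
          omega
        refine ⟨M, F, S, by rw [hsum]; simp, ?_⟩
        have hblock : blockOf M.entry M'.d = [M'.d] := by
          have hz : ∀ i, i < M'.d → M.entry i M'.d = 0 := by
            intro i hi
            show (if i = M'.d ∨ M'.d = M'.d then
              (if i = M'.d ∧ M'.d = M'.d then 1 else 0) else _) = 0
            rw [if_pos (Or.inr rfl), if_neg (by omega)]
          rw [blockOf_split_low le_rfl hz]
          rw [hmm]
          simp
        have hpre2 : cs M.entry M'.d = cs M'.entry M'.d := by
          apply flatMap_congr
          intro j hj
          rw [List.mem_range] at hj
          apply blockOf_congr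
          intro i hi
          exact hold i j (by omega) (by omega)
        have : canonSeq M = canonSeq M' ++ [M'.d] := by
          rw [canonSeq_eq, canonSeq_eq, hmd, cs_succ, hpre2, hblock]
        rw [this, ← hseq']

end Avoid101

theorem fAM_bijOn_avoid101 (n : ℕ) (hn : 0 < n) :
    Set.BijOn fAM {l : List ℕ | IsAscSeq l ∧ l.length = n ∧ ¬ Contains101 l}
      {M : FMat | IsFishburn M ∧ entrySum M = n ∧ SEFree M} := by
  refine ⟨?_, ?_, ?_⟩
  · -- maps to
    rintro l ⟨hasc, hlen, h101⟩
    obtain ⟨M, F, S, hsum, hseq⟩ := Avoid101.fwd l hasc h101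
    obtain ⟨-, -, -, -, -, A6⟩ := Avoid101.conv n M (by omega) F S (by omega)
    have hfl : fAM l = M := by rw [hseq]; exact A6
    rw [Set.mem_setOf_eq, hfl]
    exact ⟨F, by omega, S⟩
  · -- injective
    intro l1 h1 l2 h2 heq
    obtain ⟨hasc1, hlen1, h101_1⟩ := h1
    obtain ⟨hasc2, hlen2, h101_2⟩ := h2
    obtain ⟨M1, F1, S1, hsum1, hseq1⟩ := Avoid101.fwd l1 hasc1 h101_1
    obtain ⟨M2, F2, S2, hsum2, hseq2⟩ := Avoid101.fwd l2 hasc2 h101_2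
    obtain ⟨-, -, -, -, -, A6a⟩ := Avoid101.conv n M1 (by omega) F1 S1 (by omega)
    obtain ⟨-, -, -, -, -, A6b⟩ := Avoid101.conv n M2 (by omega) F2 S2 (by omega)
    have e1 : fAM l1 = M1 := by rw [hseq1]; exact A6a
    have e2 : fAM l2 = M2 := by rw [hseq2]; exact A6b
    have : M1 = M2 := by rw [← e1, ← e2, heq]
    rw [hseq1, hseq2, this]
  · -- surjective
    rintro M ⟨F, hsum, S⟩
    obtain ⟨A1, A2, A3, -, -, A6⟩ := Avoid101.conv n M (by omega) F S hsum
    exact ⟨canonSeq M, ⟨A1, A3, A2⟩, A6⟩
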